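/- Cutting-plane closure is invariant under shifting the lattice by additive units: let C ⊆ Q[X] be a cone and L, L' ⊆ Q[X] with L' ⊆ U(C) + L. Then cp_{L'}(C) ⊆ cp_L(C); in particular cp_{U(C)+L}(C) = cp_L(C). -/
import Mathlib


open MvPolynomial Pointwise

def IsCone {σ : Type} (C : Set (MvPolynomial σ ℚ)) : Prop :=
  (0 : MvPolynomial σ ℚ) ∈ C ∧ (∀ x ∈ C, ∀ y ∈ C, x + y ∈ C) ∧
    ∀ (a : ℚ), 0 ≤ a → ∀ x ∈ C, a • x ∈ C

/-- The additive units of `C`: `U(C) = C ∩ (−C)`. -/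
def unitsOf {σ : Type} (C : Set (MvPolynomial σ ℚ)) : Set (MvPolynomial σ ℚ) :=
  C ∩ (-C)

/-- `D` is closed under cutting planes with respect to `L`: for all integers `a > 0`, `b`
and `p ∈ L`, if `a·p + b ∈ D` then `p + ⌊b/a⌋ ∈ D`. -/
def ClosedCP {σ : Type} (L D : Set (MvPolynomial σ ℚ)) : Prop :=
  ∀ (a b : ℤ), 0 < a → ∀ p ∈ L,
    a • p + (b : MvPolynomial σ ℚ) ∈ D →
      p + ((⌊(b : ℚ) / (a : ℚ)⌋ : ℤ) : MvPolynomial σ ℚ) ∈ D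

/-- `cp_L(C)`: the least cone containing `C` that is closed under cutting planes with
respect to `L`. -/
def cpClosure {σ : Type} (L C : Set (MvPolynomial σ ℚ)) : Set (MvPolynomial σ ℚ) :=
  ⋂₀ {D | IsCone D ∧ C ⊆ D ∧ ClosedCP L D}

lemma cp_key {σ : Type} (C L L' : Set (MvPolynomial σ ℚ))
    (hL' : L' ⊆ unitsOf C + L) : cpClosure L' C ⊆ cpClosure L C := by
  intro x hx
  intro D hD
  obtain ⟨hcone, hCD, hcp⟩ := hD
  apply hx
  refine ⟨hcone, hCD, ?_⟩
  intro a b ha p' hp' hmem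
  obtain ⟨u, hu, p, hp, rfl⟩ := Set.mem_add.mp (hL' hp')
  have hnu : -u ∈ D := hCD hu.2
  have huD : u ∈ D := hCD hu.1
  have hanu : (a : ℚ) • (-u) ∈ D :=
    hcone.2.2 _ (by exact_mod_cast ha.le) _ hnu
  have h1 : a • p + (b : MvPolynomial σ ℚ) ∈ D := by
    have := hcone.2.1 _ hmem _ hanu
    have heq : a • (u + p) + (b : MvPolynomial σ ℚ) + (a : ℚ) • (-u)
        = a • p + (b : MvPolynomial σ ℚ) := by
      rw [Int.cast_smul_eq_zsmul]
      rw [smul_add, smul_neg]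
      ring
    rwa [heq] at this
  have h2 := hcp a b ha p hp h1
  have := hcone.2.1 _ huD _ h2
  rwa [← add_assoc] at this

/-- cutting-plane closure is invariant under shifting the lattice by
additive units: if `C` is a cone and `L' ⊆ U(C) + L`, then `cp_{L'}(C) ⊆ cp_L(C)`;
in particular `cp_{U(C)+L}(C) = cp_L(C)`. -/
theorem cp_closure_shift_invariant {σ : Type}
    (C L L' : Set (MvPolynomial σ ℚ)) (hC : IsCone C)
    (hL' : L' ⊆ unitsOf C + L) :
    cpClosure L' C ⊆ cpClosure L C ∧
      cpClosure (unitsOf C + L) C = cpClosure L C := by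
  have h0 : (0 : MvPolynomial σ ℚ) ∈ unitsOf C := ⟨hC.1, by simpa using hC.1⟩
  have hLsub : L ⊆ unitsOf C + (unitsOf C + L) := fun p hp =>
    Set.mem_add.mpr ⟨0, h0, p, Set.mem_add.mpr ⟨0, h0, p, hp, by simp⟩, by simp⟩
  exact ⟨cp_key C L L' hL', Set.Subset.antisymm
    (cp_key C L _ subset_rfl) (cp_key C (unitsOf C + L) L hLsub)⟩
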